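/- Let b ∈ (0, +∞] and let (H, φ) solve the EdGB FLRW system on [0, b) with the negative-branch initial data with parameter β. Then for all t ∈ (0, b) the scalar field satisfies −(12β^2 + 2√6)·ln((1/2)βt + 1) < φ(t) < −ln(1 + (3/5)·(β^2 − 1/(5t + 1/β)^2)). -/

import Mathlib

/-- The EdGB FLRW system on a set `I ⊆ ℝ`: `H` is continuously differentiable and
`φ` twice continuously differentiable on `I`, and for every `t ∈ I` the Hamiltonian
constraint `3H² − 3e^φ φ' H³ = φ'²/2` and the scalar field equation
`φ'' = −3Hφ' − 3e^φ H²(H² + H')` hold. -/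
def EdGB (H φ : ℝ → ℝ) (I : Set ℝ) : Prop :=
  ContDiffOn ℝ 1 H I ∧ ContDiffOn ℝ 2 φ I ∧
  (∀ t ∈ I, 3 * H t ^ 2 - 3 * Real.exp (φ t) * deriv φ t * H t ^ 3 = (deriv φ t) ^ 2 / 2) ∧
  (∀ t ∈ I, deriv (deriv φ) t =
      -3 * H t * deriv φ t - 3 * Real.exp (φ t) * H t ^ 2 * (H t ^ 2 + deriv H t))

/-- The negative-branch initial data with parameter `β`:
`H(0) = β`, `φ(0) = 0`, `φ'(0) = −3β³ − √(9β⁶ + 6β²)`, with `0 < β < √6/6`. -/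
def NegBranchData (H φ : ℝ → ℝ) (β : ℝ) : Prop :=
  0 < β ∧ β < Real.sqrt 6 / 6 ∧ H 0 = β ∧ φ 0 = 0 ∧
  deriv φ 0 = -3 * β ^ 3 - Real.sqrt (9 * β ^ 6 + 6 * β ^ 2)

open Set Real Filter Topology

namespace S12

structure Ctx (c β : ℝ) (H φ : ℝ → ℝ) : Prop where
  hc : 0 < c
  hβ : 0 < β
  hβ6 : β < Real.sqrt 6 / 6
  hH : ContDiffOn ℝ 1 H (Set.Ico 0 c)
  hφ : ContDiffOn ℝ 2 φ (Set.Ico 0 c)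
  hcon : ∀ u ∈ Set.Ico (0:ℝ) c,
    3 * H u ^ 2 - 3 * Real.exp (φ u) * deriv φ u * H u ^ 3 = (deriv φ u) ^ 2 / 2
  hsc : ∀ u ∈ Set.Ico (0:ℝ) c, deriv (deriv φ) u =
    -3 * H u * deriv φ u - 3 * Real.exp (φ u) * H u ^ 2 * (H u ^ 2 + deriv H u)
  hH0 : H 0 = β
  hφ0 : φ 0 = 0
  hX0 : deriv φ 0 = -3 * β ^ 3 - Real.sqrt (9 * β ^ 6 + 6 * β ^ 2)

variable {c β : ℝ} {H φ : ℝ → ℝ}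

lemma Ctx.ioo_subset (_h : Ctx c β H φ) : Ioo (0:ℝ) c ⊆ Ico 0 c := Ioo_subset_Ico_self

lemma Ctx.mem_nhds (_h : Ctx c β H φ) {u : ℝ} (hu : u ∈ Ioo (0:ℝ) c) :
    Ico (0:ℝ) c ∈ 𝓝 u := mem_of_superset (Ioo_mem_nhds hu.1 hu.2) Ioo_subset_Ico_self

lemma Ctx.hHcont (h : Ctx c β H φ) : ContinuousOn H (Ico 0 c) := h.hH.continuousOn

lemma Ctx.hφcont (h : Ctx c β H φ) : ContinuousOn φ (Ico 0 c) := h.hφ.continuousOn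

lemma Ctx.hX0neg (h : Ctx c β H φ) : deriv φ 0 < 0 := by
  rw [h.hX0]
  have hβ := h.hβ
  have h1 : 0 < 3 * β ^ 3 := by positivity
  have h2 : 0 ≤ Real.sqrt (9 * β ^ 6 + 6 * β ^ 2) := Real.sqrt_nonneg _
  linarith

lemma Ctx.hXeq (h : Ctx c β H φ) : ∀ u ∈ Ico (0:ℝ) c,
    derivWithin φ (Ico 0 c) u = deriv φ u := by
  intro u hu
  rcases eq_or_lt_of_le hu.1 with h0 | h0
  · subst h0
    have hdiff : DifferentiableAt ℝ φ 0 := by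
      by_contra hnd
      exact (ne_of_lt h.hX0neg) (deriv_zero_of_not_differentiableAt hnd)
    exact hdiff.derivWithin (uniqueDiffOn_Ico 0 c 0 hu)
  · exact derivWithin_of_mem_nhds (h.mem_nhds ⟨h0, hu.2⟩)

lemma Ctx.hD1 (h : Ctx c β H φ) :
    ContDiffOn ℝ 1 (derivWithin φ (Ico 0 c)) (Ico 0 c) :=
  h.hφ.derivWithin (uniqueDiffOn_Ico 0 c) (by norm_num)

lemma Ctx.hXcont (h : Ctx c β H φ) : ContinuousOn (deriv φ) (Ico 0 c) :=
  h.hD1.continuousOn.congr fun u hu => (h.hXeq u hu).symm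

lemma Ctx.hdH (h : Ctx c β H φ) {u : ℝ} (hu : u ∈ Ioo (0:ℝ) c) :
    HasDerivAt H (deriv H u) u :=
  (((h.hH.differentiableOn (by norm_num) u (h.ioo_subset hu)).differentiableAt
    (h.mem_nhds hu))).hasDerivAt

lemma Ctx.hdφ (h : Ctx c β H φ) {u : ℝ} (hu : u ∈ Ioo (0:ℝ) c) :
    HasDerivAt φ (deriv φ u) u :=
  (((h.hφ.differentiableOn (by norm_num) u (h.ioo_subset hu)).differentiableAt
    (h.mem_nhds hu))).hasDerivAt

lemma Ctx.hdX (h : Ctx c β H φ) {u : ℝ} (hu : u ∈ Ioo (0:ℝ) c) :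
    HasDerivAt (deriv φ) (deriv (deriv φ) u) u := by
  have h1 : DifferentiableAt ℝ (derivWithin φ (Ico 0 c)) u :=
    (h.hD1.differentiableOn (by norm_num) u (h.ioo_subset hu)).differentiableAt (h.mem_nhds hu)
  have heq : derivWithin φ (Ico 0 c) =ᶠ[𝓝 u] deriv φ :=
    eventuallyEq_of_mem (h.mem_nhds hu) fun v hv => h.hXeq v hv
  exact (heq.differentiableAt_iff.mp h1).hasDerivAt


lemma Ctx.hquad (h : Ctx c β H φ) {u : ℝ} (hu : u ∈ Ico (0:ℝ) c) :
    (deriv φ u + 3 * Real.exp (φ u) * H u ^ 3) ^ 2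
      = 9 * Real.exp (φ u) ^ 2 * H u ^ 6 + 6 * H u ^ 2 := by
  have hc := h.hcon u hu
  nlinarith [hc]

lemma Ctx.hderivId (h : Ctx c β H φ) {u : ℝ} (hu : u ∈ Ioo (0:ℝ) c) :
    deriv H u * (6 * H u + 9 * Real.exp (φ u) ^ 2 * H u ^ 5
        - 6 * Real.exp (φ u) * deriv φ u * H u ^ 2)
      = -(3 * H u * (deriv φ u) ^ 2 - 3 * Real.exp (φ u) * (deriv φ u) ^ 2 * H u ^ 3
        + 12 * Real.exp (φ u) * H u ^ 4 * deriv φ u + 9 * Real.exp (φ u) ^ 2 * H u ^ 7) := by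
  have hH' := h.hdH hu
  have hφ' := h.hdφ hu
  have hX' := h.hdX hu
  have hE : HasDerivAt (fun s => Real.exp (φ s)) (Real.exp (φ u) * deriv φ u) u := hφ'.exp
  have h1 : HasDerivAt (fun s => 3 * H s ^ 2) (3 * (2 * H u * deriv H u)) u := by
    simpa using ((hH'.pow 2).const_mul (3:ℝ))
  have h3 : HasDerivAt (fun s => H s ^ 3) (3 * H u ^ 2 * deriv H u) u := by
    simpa using (hH'.fun_pow 3)
  have h2 : HasDerivAt (fun s => 3 * (Real.exp (φ s) * deriv φ s * H s ^ 3))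
      (3 * ((Real.exp (φ u) * deriv φ u * deriv φ u
        + Real.exp (φ u) * deriv (deriv φ) u) * H u ^ 3
        + Real.exp (φ u) * deriv φ u * (3 * H u ^ 2 * deriv H u))) u :=
    ((hE.mul hX').mul h3).const_mul (3:ℝ)
  have h4 : HasDerivAt (fun s => (deriv φ s) ^ 2 / 2)
      (2 * deriv φ u * deriv (deriv φ) u / 2) u := by
    simpa using ((hX'.pow 2).div_const 2)
  have hC : HasDerivAt (fun s => 3 * H s ^ 2
      - 3 * (Real.exp (φ s) * deriv φ s * H s ^ 3) - (deriv φ s) ^ 2 / 2)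
      (3 * (2 * H u * deriv H u)
        - 3 * ((Real.exp (φ u) * deriv φ u * deriv φ u
          + Real.exp (φ u) * deriv (deriv φ) u) * H u ^ 3
          + Real.exp (φ u) * deriv φ u * (3 * H u ^ 2 * deriv H u))
        - 2 * deriv φ u * deriv (deriv φ) u / 2) u := (h1.sub h2).sub h4
  have hzero : (fun s => 3 * H s ^ 2
      - 3 * (Real.exp (φ s) * deriv φ s * H s ^ 3) - (deriv φ s) ^ 2 / 2)
      =ᶠ[𝓝 u] (fun _ => (0:ℝ)) := by
    filter_upwards [h.mem_nhds hu] with v hv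
    have := h.hcon v hv
    linarith
  have hC0 : HasDerivAt (fun s => 3 * H s ^ 2
      - 3 * (Real.exp (φ s) * deriv φ s * H s ^ 3) - (deriv φ s) ^ 2 / 2) 0 u :=
    (hasDerivAt_const u (0:ℝ)).congr_of_eventuallyEq hzero
  have hval : (3 * (2 * H u * deriv H u)
        - 3 * ((Real.exp (φ u) * deriv φ u * deriv φ u
          + Real.exp (φ u) * deriv (deriv φ) u) * H u ^ 3
          + Real.exp (φ u) * deriv φ u * (3 * H u ^ 2 * deriv H u))
        - 2 * deriv φ u * deriv (deriv φ) u / 2) = 0 := hC.unique hC0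
  have hy := h.hsc u (h.ioo_subset hu)
  rw [hy] at hval
  ring_nf
  ring_nf at hval
  linarith


lemma sqrt6_sq : Real.sqrt 6 ^ 2 = 6 := Real.sq_sqrt (by norm_num)

lemma sqrt6_pos : 0 < Real.sqrt 6 := Real.sqrt_pos.mpr (by norm_num)

lemma sqrt6_lt : Real.sqrt 6 < 5 / 2 := by
  nlinarith [sqrt6_sq, sqrt6_pos]

/-- On any interval `[0,T]` where `H` stays positive, the branch quantity
`ρ = φ' + 3 e^φ H³` stays negative. -/
lemma Ctx.rho_neg (h : Ctx c β H φ) {T : ℝ} (hT0 : 0 ≤ T) (hTc : T < c)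
    (hpos : ∀ u ∈ Icc (0:ℝ) T, 0 < H u) :
    ∀ u ∈ Icc (0:ℝ) T, deriv φ u + 3 * Real.exp (φ u) * H u ^ 3 < 0 := by
  have hsub : Icc (0:ℝ) T ⊆ Ico 0 c := fun v hv => ⟨hv.1, lt_of_le_of_lt hv.2 hTc⟩
  set ρ : ℝ → ℝ := fun u => deriv φ u + 3 * Real.exp (φ u) * H u ^ 3 with hρ
  have hρcont : ContinuousOn ρ (Icc 0 T) := by
    apply ContinuousOn.add (h.hXcont.mono hsub)
    exact (continuousOn_const.mul ((h.hφcont.mono hsub).rexp)).mul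
      (((h.hHcont.mono hsub).pow 3))
  have hρ0 : ρ 0 < 0 := by
    have hβ := h.hβ
    have hv : ρ 0 = -Real.sqrt (9 * β ^ 6 + 6 * β ^ 2) := by
      simp only [hρ, h.hX0, h.hφ0, h.hH0, Real.exp_zero]
      ring
    have hs : 0 < Real.sqrt (9 * β ^ 6 + 6 * β ^ 2) := Real.sqrt_pos.mpr (by positivity)
    rw [hv]
    linarith
  have hρne : ∀ u ∈ Icc (0:ℝ) T, ρ u ≠ 0 := by
    intro u hu hz
    have hq := h.hquad (hsub hu)
    have hH := hpos u hu
    have hE := Real.exp_pos (φ u)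
    rw [hρ] at hz
    simp only at hz
    nlinarith [hq, sq_nonneg (Real.exp (φ u) * H u ^ 3)]
  intro u hu
  by_contra hge
  push_neg at hge
  have hne := hρne u hu
  have hgt : 0 < ρ u := lt_of_le_of_ne hge (Ne.symm hne)
  have h0u : (0:ℝ) ≤ u := hu.1
  have hIcc : Icc (0:ℝ) u ⊆ Icc (0:ℝ) T := Icc_subset_Icc le_rfl hu.2
  have := intermediate_value_Icc h0u (hρcont.mono hIcc)
  have h0mem : (0:ℝ) ∈ Icc (ρ 0) (ρ u) := ⟨hρ0.le, hgt.le⟩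
  obtain ⟨z, hz, hz0⟩ := this h0mem
  exact hρne z (hIcc hz) hz0

/-- Pointwise bounds on `φ'` from the constraint and negativity of the branch quantity. -/
lemma xbounds {x E a : ℝ} (hE : 0 < E) (ha : 0 < a)
    (hq : (x + 3 * E * a ^ 3) ^ 2 = 9 * E ^ 2 * a ^ 6 + 6 * a ^ 2)
    (hneg : x + 3 * E * a ^ 3 < 0) :
    x < -6 * E * a ^ 3 ∧ -6 * E * a ^ 3 - Real.sqrt 6 * a < x ∧ x ≤ -Real.sqrt 6 * a := by
  have h6 := sqrt6_sq
  have h6p := sqrt6_pos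
  refine ⟨?_, ?_, ?_⟩
  · nlinarith [sq_nonneg (x + 3 * E * a ^ 3), mul_pos (mul_pos hE ha) ha]
  · by_contra hle
    push_neg at hle
    have h1 : 0 < 3 * E * a ^ 3 + Real.sqrt 6 * a := by positivity
    have h2 : (3 * E * a ^ 3 + Real.sqrt 6 * a) * (3 * E * a ^ 3 + Real.sqrt 6 * a)
        ≤ (-(x + 3 * E * a ^ 3)) * (-(x + 3 * E * a ^ 3)) :=
      mul_self_le_mul_self h1.le (by linarith)
    nlinarith [h2, mul_pos (mul_pos hE (pow_pos ha 4)) h6p]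
  · nlinarith [mul_pos h6p ha, sq_nonneg (x + 3 * E * a ^ 3 + Real.sqrt 6 * a),
      mul_pos (mul_pos hE ha) (mul_pos ha ha)]


set_option maxHeartbeats 1600000 in
/-- Bounds on `H'` from the differentiated constraint. -/
lemma dHbounds {a ap E x : ℝ} (ha : 0 < a) (hE : 0 < E)
    (hm : E * a ^ 2 ≤ 1 / 6)
    (hx2 : x ^ 2 = 6 * a ^ 2 - 6 * E * x * a ^ 3)
    (hx0 : x ≤ 0) (hx35 : -(7 / 2) * a ≤ x)
    (hid : ap * (6 * a + 9 * E ^ 2 * a ^ 5 - 6 * E * x * a ^ 2)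
      = -(3 * a * x ^ 2 - 3 * E * x ^ 2 * a ^ 3 + 12 * E * a ^ 4 * x + 9 * E ^ 2 * a ^ 7)) :
    -4 * a ^ 2 ≤ ap ∧ ap ≤ -(3 / 2) * a ^ 2 := by
  have e1 : (0:ℝ) ≤ 6 * E * a ^ 2 * (-x) := by
    have : (0:ℝ) ≤ -x := neg_nonneg.mpr hx0
    positivity
  have e2 : (0:ℝ) ≤ 9 * E ^ 2 * a ^ 5 := by positivity
  have e3 : (0:ℝ) < 6 * a := by linarith
  have hD : 0 < 6 * a + 9 * E ^ 2 * a ^ 5 - 6 * E * x * a ^ 2 := by linarith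
  have key1 : 4 * a ^ 2 * (6 * a + 9 * E ^ 2 * a ^ 5 - 6 * E * x * a ^ 2)
      - (3 * a * x ^ 2 - 3 * E * x ^ 2 * a ^ 3 + 12 * E * a ^ 4 * x + 9 * E ^ 2 * a ^ 7)
      = 6 * a ^ 3 + 27 * E ^ 2 * a ^ 7 + 18 * E * a ^ 5
        - 18 * E * a ^ 4 * x - 18 * E ^ 2 * a ^ 6 * x := by
    linear_combination (-3 * a + 3 * E * a ^ 3) * hx2
  have key2 : (3 * a * x ^ 2 - 3 * E * x ^ 2 * a ^ 3 + 12 * E * a ^ 4 * x + 9 * E ^ 2 * a ^ 7)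
      - (3 / 2) * a ^ 2 * (6 * a + 9 * E ^ 2 * a ^ 5 - 6 * E * x * a ^ 2)
      = 9 * a ^ 3 + 3 * E * a ^ 4 * x - 18 * E * a ^ 5 + 18 * E ^ 2 * a ^ 6 * x
        - (9 / 2) * E ^ 2 * a ^ 7 := by
    linear_combination (3 * a - 3 * E * a ^ 3) * hx2
  have hm2 : E ^ 2 * a ^ 4 ≤ 1 / 36 := by
    have := mul_self_le_mul_self (by positivity : (0:ℝ) ≤ E * a ^ 2) hm
    nlinarith [this]
  have hEa5 : E * a ^ 5 ≤ a ^ 3 / 6 := by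
    have := mul_le_mul_of_nonneg_right hm (le_of_lt (pow_pos ha 3))
    nlinarith [this]
  have hEa7 : E ^ 2 * a ^ 7 ≤ a ^ 3 / 36 := by
    have := mul_le_mul_of_nonneg_right hm2 (le_of_lt (pow_pos ha 3))
    nlinarith [this]
  have c1 : -(21 / 2) * (E * a ^ 5) ≤ 3 * E * a ^ 4 * x := by
    have := mul_le_mul_of_nonneg_left hx35 (by positivity : (0:ℝ) ≤ 3 * E * a ^ 4)
    nlinarith [this]
  have c2 : -63 * (E ^ 2 * a ^ 7) ≤ 18 * E ^ 2 * a ^ 6 * x := by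
    have := mul_le_mul_of_nonneg_left hx35 (by positivity : (0:ℝ) ≤ 18 * E ^ 2 * a ^ 6)
    nlinarith [this]
  have d1 : (0:ℝ) ≤ 18 * E * a ^ 4 * (-x) := by
    have : (0:ℝ) ≤ -x := neg_nonneg.mpr hx0
    positivity
  have d2 : (0:ℝ) ≤ 18 * E ^ 2 * a ^ 6 * (-x) := by
    have : (0:ℝ) ≤ -x := neg_nonneg.mpr hx0
    positivity
  have ha3 : (0:ℝ) < a ^ 3 := pow_pos ha 3
  constructor
  · by_contra hcc
    push_neg at hcc
    have hmul := mul_lt_mul_of_pos_right hcc hD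
    have hN : (3 * a * x ^ 2 - 3 * E * x ^ 2 * a ^ 3 + 12 * E * a ^ 4 * x + 9 * E ^ 2 * a ^ 7)
        ≤ 4 * a ^ 2 * (6 * a + 9 * E ^ 2 * a ^ 5 - 6 * E * x * a ^ 2) := by
      nlinarith [key1, d1, d2, ha3, e2, mul_pos hE hE, pow_pos ha 7]
    linarith [hmul, hid, hN]
  · by_contra hcc
    push_neg at hcc
    have hmul := mul_lt_mul_of_pos_right hcc hD
    have hN : (3 / 2) * a ^ 2 * (6 * a + 9 * E ^ 2 * a ^ 5 - 6 * E * x * a ^ 2)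
        ≤ (3 * a * x ^ 2 - 3 * E * x ^ 2 * a ^ 3 + 12 * E * a ^ 4 * x + 9 * E ^ 2 * a ^ 7) := by
      nlinarith [key2, c1, c2, hEa5, hEa7, ha3]
    linarith [hmul, hid, hN]

set_option maxHeartbeats 1600000 in
/-- Core quantitative estimates on an interval `[0,T]` where `H` is positive,
bounded by `B`, and `φ` is bounded by `L` with `e^L B² ≤ 1/6`. -/
lemma Ctx.core (h : Ctx c β H φ) {T : ℝ} (hTc : T < c)
    {B L : ℝ} (hBL : Real.exp L * B ^ 2 ≤ 1 / 6)
    (hgood : ∀ u ∈ Icc (0:ℝ) T, 0 < H u ∧ H u ≤ B ∧ φ u ≤ L) :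
    ∀ u ∈ Icc (0:ℝ) T,
      deriv φ u < -6 * Real.exp (φ u) * H u ^ 3 ∧
      -6 * Real.exp (φ u) * H u ^ 3 - Real.sqrt 6 * H u < deriv φ u ∧
      deriv φ u ≤ -Real.sqrt 6 * H u ∧
      φ u ≤ 0 ∧
      1 / (4 * u + 1 / β) ≤ H u ∧ H u ≤ 1 / ((3 / 2) * u + 1 / β) := by
  have hβ := h.hβ
  have hsub : Icc (0:ℝ) T ⊆ Ico 0 c := fun v hv => ⟨hv.1, lt_of_le_of_lt hv.2 hTc⟩
  have hsubo : Ioo (0:ℝ) T ⊆ Ioo 0 c := fun v hv => ⟨hv.1, lt_trans hv.2 hTc⟩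
  have hoi : Ioo (0:ℝ) T ⊆ Icc (0:ℝ) T := Ioo_subset_Icc_self
  by_cases hT0 : T < 0
  · intro u hu; exact absurd (hu.1.trans hu.2) (not_le.mpr hT0)
  push_neg at hT0
  have hρ := h.rho_neg hT0 hTc (fun u hu => (hgood u hu).1)
  have xb : ∀ u ∈ Icc (0:ℝ) T,
      deriv φ u < -6 * Real.exp (φ u) * H u ^ 3 ∧
      -6 * Real.exp (φ u) * H u ^ 3 - Real.sqrt 6 * H u < deriv φ u ∧
      deriv φ u ≤ -Real.sqrt 6 * H u := fun u hu =>
    xbounds (Real.exp_pos (φ u)) (hgood u hu).1 (h.hquad (hsub hu)) (hρ u hu)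
  have hmb : ∀ u ∈ Icc (0:ℝ) T, Real.exp (φ u) * H u ^ 2 ≤ 1 / 6 := by
    intro u hu
    obtain ⟨h1, h2, h3⟩ := hgood u hu
    have e1 : Real.exp (φ u) ≤ Real.exp L := Real.exp_le_exp.mpr h3
    have e2 : H u ^ 2 ≤ B ^ 2 := by nlinarith
    calc Real.exp (φ u) * H u ^ 2 ≤ Real.exp L * B ^ 2 := by
          apply mul_le_mul e1 e2 (by positivity) (Real.exp_pos L).le
      _ ≤ 1 / 6 := hBL
  have hφ0le : ∀ u ∈ Icc (0:ℝ) T, φ u ≤ 0 := by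
    have hanti : AntitoneOn φ (Icc 0 T) := by
      apply antitoneOn_of_deriv_nonpos (convex_Icc 0 T) (h.hφcont.mono hsub)
      · intro u hu
        rw [interior_Icc] at hu
        exact (h.hdφ (hsubo hu)).differentiableAt.differentiableWithinAt
      · intro u hu
        rw [interior_Icc] at hu
        have h1 := (hgood u (hoi hu)).1
        have h2 := (xb u (hoi hu)).2.2
        nlinarith [sqrt6_pos]
    intro u hu
    have := hanti (left_mem_Icc.mpr hT0) hu hu.1
    rw [h.hφ0] at this
    exact this
  have hdHb : ∀ u ∈ Ioo (0:ℝ) T, -4 * H u ^ 2 ≤ deriv H u ∧ deriv H u ≤ -(3 / 2) * H u ^ 2 := by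
    intro u hu
    have hu' := hoi hu
    obtain ⟨h1, _, _⟩ := hgood u hu'
    have hE := Real.exp_pos (φ u)
    have hm := hmb u hu'
    have hx2 : (deriv φ u) ^ 2 = 6 * H u ^ 2 - 6 * Real.exp (φ u) * deriv φ u * H u ^ 3 := by
      have := h.hcon u (hsub hu')
      linarith
    obtain ⟨xb1, xb2, xb3⟩ := xb u hu'
    have hx0 : deriv φ u ≤ 0 := by nlinarith [sqrt6_pos, xb3]
    have hx35 : -(7 / 2) * H u ≤ deriv φ u := by
      have h6a : 6 * Real.exp (φ u) * H u ^ 3 ≤ H u := by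
        have := mul_le_mul_of_nonneg_right hm (le_of_lt h1)
        nlinarith [this]
      nlinarith [xb2, sqrt6_lt, h6a, h1]
    exact dHbounds h1 hE hm hx2 hx0 hx35 (h.hderivId (hsubo hu))
  have hHne : ∀ u ∈ Icc (0:ℝ) T, H u ≠ 0 := fun u hu => (hgood u hu).1.ne'
  have hk1 : MonotoneOn (fun u => 1 / β + 4 * u - (H u)⁻¹) (Icc 0 T) := by
    apply monotoneOn_of_deriv_nonneg (convex_Icc 0 T)
    · exact (continuousOn_const.add (continuousOn_const.mul continuousOn_id)).sub
        ((h.hHcont.mono hsub).inv₀ hHne)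
    · intro u hu
      rw [interior_Icc] at hu
      exact (((hasDerivAt_const u (1/β)).add ((hasDerivAt_id u).const_mul 4)).sub
        ((h.hdH (hsubo hu)).inv (hHne u (hoi hu)))).differentiableAt.differentiableWithinAt
    · intro u hu
      rw [interior_Icc] at hu
      have hd : HasDerivAt (fun u => 1 / β + 4 * u - (H u)⁻¹)
          (0 + 4 * 1 - -(deriv H u) / H u ^ 2) u :=
        ((hasDerivAt_const u (1/β)).add ((hasDerivAt_id u).const_mul 4)).sub
          ((h.hdH (hsubo hu)).inv (hHne u (hoi hu)))
      rw [hd.deriv]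
      have h1 := (hgood u (hoi hu)).1
      have h2 : (0:ℝ) < H u ^ 2 := by positivity
      have h3 := (hdHb u hu).1
      have h4 : -(deriv H u) / H u ^ 2 ≤ 4 := by
        rw [div_le_iff₀ h2]; linarith
      linarith
  have hk2 : MonotoneOn (fun u => (H u)⁻¹ - 1 / β - (3 / 2) * u) (Icc 0 T) := by
    apply monotoneOn_of_deriv_nonneg (convex_Icc 0 T)
    · exact (((h.hHcont.mono hsub).inv₀ hHne).sub continuousOn_const).sub
        (continuousOn_const.mul continuousOn_id)
    · intro u hu
      rw [interior_Icc] at hu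
      exact ((((h.hdH (hsubo hu)).inv (hHne u (hoi hu))).sub_const _).sub
        ((hasDerivAt_id u).const_mul (3/2))).differentiableAt.differentiableWithinAt
    · intro u hu
      rw [interior_Icc] at hu
      have hd : HasDerivAt (fun u => (H u)⁻¹ - 1 / β - (3 / 2) * u)
          (-(deriv H u) / H u ^ 2 - 0 - 3 / 2 * 1) u :=
        (((h.hdH (hsubo hu)).inv (hHne u (hoi hu))).sub (hasDerivAt_const u (1/β))).sub
          ((hasDerivAt_id u).const_mul (3/2))
      rw [hd.deriv]
      have h1 := (hgood u (hoi hu)).1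
      have h2 : (0:ℝ) < H u ^ 2 := by positivity
      have h3 := (hdHb u hu).2
      have h4 : (3 / 2 : ℝ) ≤ -(deriv H u) / H u ^ 2 := by
        rw [le_div_iff₀ h2]; linarith
      linarith
  have h0T : (0:ℝ) ∈ Icc (0:ℝ) T := left_mem_Icc.mpr hT0
  intro u hu
  obtain ⟨xb1, xb2, xb3⟩ := xb u hu
  have h1 := (hgood u hu).1
  refine ⟨xb1, xb2, xb3, hφ0le u hu, ?_, ?_⟩
  · have hmono' : 1 / β + 4 * 0 - (H 0)⁻¹ ≤ 1 / β + 4 * u - (H u)⁻¹ := hk1 h0T hu hu.1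
    rw [h.hH0, one_div] at hmono'
    have h2 : (H u)⁻¹ ≤ 4 * u + 1 / β := by
      rw [one_div]
      linarith [hmono']
    have h3 : (0:ℝ) < 4 * u + 1 / β := by
      have hb : (0:ℝ) < 1 / β := by positivity
      linarith [hu.1]
    rw [div_le_iff₀ h3]
    have := mul_le_mul_of_nonneg_left h2 h1.le
    rw [mul_inv_cancel₀ (hHne u hu)] at this
    linarith [this]
  · have hmono' : (H 0)⁻¹ - 1 / β - (3 / 2) * 0 ≤ (H u)⁻¹ - 1 / β - (3 / 2) * u := hk2 h0T hu hu.1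
    rw [h.hH0] at hmono'
    have h2 : 1 / β + (3 / 2) * u ≤ (H u)⁻¹ := by
      rw [one_div] at *
      linarith [hmono']
    have h3 : (0:ℝ) < (3 / 2) * u + 1 / β := by
      have hb : (0:ℝ) < 1 / β := by positivity
      linarith [hu.1]
    rw [le_div_iff₀ h3]
    have h4 : (0:ℝ) < (H u)⁻¹ := by positivity
    have := mul_le_mul_of_nonneg_left h2 h1.le
    rw [mul_inv_cancel₀ (hHne u hu)] at this
    linarith [this]

set_option maxHeartbeats 1600000 in
/-- Bootstrap: the δ-relaxed invariant propagates over `[0,t]`. -/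
lemma Ctx.boot (h : Ctx c β H φ) {t : ℝ} (ht0 : 0 < t) (htc : t < c)
    {δ : ℝ} (hδ : 0 < δ) (hδ6 : Real.exp δ * (β + δ) ^ 2 ≤ 1 / 6) :
    ∀ u ∈ Icc (0:ℝ) t, 1 / (5 * u + 1 / β + δ) ≤ H u ∧ H u ≤ β + δ ∧ φ u ≤ δ := by
  have hβ := h.hβ
  have hβinv : (0:ℝ) < 1 / β := by positivity
  have hsubt : Icc (0:ℝ) t ⊆ Ico 0 c := fun v hv => ⟨hv.1, lt_of_le_of_lt hv.2 htc⟩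
  have hden : ∀ u : ℝ, 0 ≤ u → (0:ℝ) < 5 * u + 1 / β + δ := fun u hu => by linarith
  set Good : ℝ → Prop := fun u => 1 / (5 * u + 1 / β + δ) ≤ H u ∧ H u ≤ β + δ ∧ φ u ≤ δ
    with hGood
  set S : Set ℝ := {s | s ∈ Icc (0:ℝ) t ∧ ∀ u ∈ Icc (0:ℝ) s, Good u} with hS
  have hGood0 : Good 0 := by
    refine ⟨?_, ?_, ?_⟩
    · rw [h.hH0]
      have h1 : 1 / (1 / β + δ) ≤ 1 / (1 / β) := by
        apply one_div_le_one_div_of_le hβinv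
        linarith
      rw [one_div_one_div] at h1
      calc 1 / (5 * 0 + 1 / β + δ) = 1 / (1 / β + δ) := by norm_num
        _ ≤ β := h1
    · rw [h.hH0]; linarith
    · rw [h.hφ0]; linarith
  have hS0 : (0:ℝ) ∈ S := by
    refine ⟨⟨le_rfl, ht0.le⟩, ?_⟩
    intro u hu
    have : u = 0 := le_antisymm hu.2 hu.1
    rwa [this]
  have hne : S.Nonempty := ⟨0, hS0⟩
  have hbdd : BddAbove S := ⟨t, fun s hs => hs.1.2⟩
  set τ := sSup S with hτ
  have hτ0 : 0 ≤ τ := le_csSup hbdd hS0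
  have hτt : τ ≤ t := csSup_le hne fun s hs => hs.1.2
  have hbefore : ∀ v, 0 ≤ v → v < τ → Good v := by
    intro v hv0 hvτ
    obtain ⟨s, hsS, hvs⟩ := exists_lt_of_lt_csSup hne hvτ
    exact hsS.2 v ⟨hv0, hvs.le⟩
  -- continuity of the three defect functions on [0,t]
  have hcF1 : ContinuousOn (fun v => H v - 1 / (5 * v + 1 / β + δ)) (Icc 0 t) := by
    apply (h.hHcont.mono hsubt).sub
    apply continuousOn_const.div
    · exact (by fun_prop : Continuous fun v : ℝ => 5 * v + 1 / β + δ).continuousOn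
    · intro v hv; exact (hden v hv.1).ne'
  have hcF2 : ContinuousOn (fun v => β + δ - H v) (Icc 0 t) :=
    continuousOn_const.sub (h.hHcont.mono hsubt)
  have hcF3 : ContinuousOn (fun v => δ - φ v) (Icc 0 t) :=
    continuousOn_const.sub (h.hφcont.mono hsubt)
  have hτgood : ∀ u ∈ Icc (0:ℝ) τ, Good u := by
    intro u hu
    rcases lt_or_eq_of_le hu.2 with hlt | heq
    · exact hbefore u hu.1 hlt
    · rcases eq_or_lt_of_le hu.1 with h0u | h0u
      · rw [← h0u]; exact hGood0
      · -- u = τ > 0 : limit argument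
        have hut : u ∈ Icc (0:ℝ) t := ⟨hu.1, heq ▸ hτt⟩
        have hlim : ∀ F : ℝ → ℝ, ContinuousOn F (Icc 0 t) →
            (∀ v ∈ Ico (0:ℝ) u, 0 ≤ F v) → 0 ≤ F u := by
          intro F hFc hF
          have hcl : u ∈ closure (Ico (0:ℝ) u) := by
            rw [closure_Ico (ne_of_lt h0u)]
            exact ⟨hu.1, le_rfl⟩
          have hnb : (𝓝[Ico (0:ℝ) u] u).NeBot := mem_closure_iff_nhdsWithin_neBot.mp hcl
          have hsub2 : Ico (0:ℝ) u ⊆ Icc 0 t := fun v hv => ⟨hv.1, hv.2.le.trans hut.2⟩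
          have htd : Filter.Tendsto F (𝓝[Ico (0:ℝ) u] u) (𝓝 (F u)) :=
            (hFc.continuousWithinAt hut).mono hsub2
          exact ge_of_tendsto htd (eventually_mem_nhdsWithin.mono fun v hv => hF v hv)
        have hgv : ∀ v ∈ Ico (0:ℝ) u, Good v := fun v hv =>
          hbefore v hv.1 (heq ▸ hv.2)
        refine ⟨?_, ?_, ?_⟩
        · have := hlim _ hcF1 fun v hv => by linarith [(hgv v hv).1]
          linarith
        · have := hlim _ hcF2 fun v hv => by linarith [(hgv v hv).2.1]
          linarith
        · have := hlim _ hcF3 fun v hv => by linarith [(hgv v hv).2.2]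
          linarith
  -- If τ < t we can extend, contradiction
  rcases eq_or_lt_of_le hτt with heq | hlt
  · intro u hu; exact hτgood u (heq ▸ hu)
  exfalso
  have hτc : τ < c := lt_trans hlt htc
  have hcoreGood : ∀ u ∈ Icc (0:ℝ) τ, 0 < H u ∧ H u ≤ β + δ ∧ φ u ≤ δ := by
    intro u hu
    obtain ⟨g1, g2, g3⟩ := hτgood u hu
    exact ⟨lt_of_lt_of_le (one_div_pos.mpr (hden u hu.1)) g1, g2, g3⟩
  have hcore := h.core hτc hδ6 hcoreGood
  obtain ⟨_, _, _, hφ0, hH1, hH2⟩ := hcore τ ⟨hτ0, le_rfl⟩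
  have s1 : 1 / (5 * τ + 1 / β + δ) < H τ := by
    have h1 : (0:ℝ) < 4 * τ + 1 / β := by linarith
    have h2 : 1 / (5 * τ + 1 / β + δ) < 1 / (4 * τ + 1 / β) :=
      one_div_lt_one_div_of_lt h1 (by linarith)
    linarith
  have s2 : H τ < β + δ := by
    have h1 : 1 / ((3 / 2) * τ + 1 / β) ≤ 1 / (1 / β) :=
      one_div_le_one_div_of_le hβinv (by linarith)
    rw [one_div_one_div] at h1
    linarith
  have s3 : φ τ < δ := by linarith
  have hτmem : τ ∈ Icc (0:ℝ) t := ⟨hτ0, hτt⟩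
  have hev : ∀ᶠ v in 𝓝[Icc (0:ℝ) t] τ,
      0 < H v - 1 / (5 * v + 1 / β + δ) ∧ 0 < β + δ - H v ∧ 0 < δ - φ v := by
    have e1 := (hcF1.continuousWithinAt hτmem).eventually (lt_mem_nhds (by linarith :
      (0:ℝ) < H τ - 1 / (5 * τ + 1 / β + δ)))
    have e2 := (hcF2.continuousWithinAt hτmem).eventually (lt_mem_nhds (by linarith :
      (0:ℝ) < β + δ - H τ))
    have e3 := (hcF3.continuousWithinAt hτmem).eventually (lt_mem_nhds (by linarith :
      (0:ℝ) < δ - φ τ))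
    filter_upwards [e1, e2, e3] with v h1 h2 h3
    exact ⟨h1, h2, h3⟩
  rw [Filter.eventually_iff, Metric.mem_nhdsWithin_iff] at hev
  obtain ⟨ε, hε, hball⟩ := hev
  set s' := min t (τ + ε / 2) with hs'
  have hτs' : τ < s' := lt_min hlt (by linarith)
  have hs't : s' ≤ t := min_le_left _ _
  have hs'S : s' ∈ S := by
    refine ⟨⟨le_trans hτ0 hτs'.le, hs't⟩, ?_⟩
    intro u hu
    rcases le_or_gt u τ with hle | hgt
    · exact hτgood u ⟨hu.1, hle⟩
    · have hu1 : u ∈ Metric.ball τ ε := by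
        rw [Metric.mem_ball, Real.dist_eq, abs_of_pos (by linarith)]
        have : u ≤ τ + ε / 2 := le_trans hu.2 (min_le_right _ _)
        linarith
      have hu2 : u ∈ Icc (0:ℝ) t := ⟨hu.1, hu.2.trans hs't⟩
      obtain ⟨g1, g2, g3⟩ := hball ⟨hu1, hu2⟩
      exact ⟨by linarith, by linarith, by linarith⟩
  have := le_csSup hbdd hs'S
  linarith

lemma Ctx.hβ2 (h : Ctx c β H φ) : β ^ 2 < 1 / 6 := by
  have h1 := h.hβ
  have h2 := h.hβ6
  nlinarith [sqrt6_sq, sqrt6_pos]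

lemma Ctx.hsmall (h : Ctx c β H φ) : ∀ ε > (0:ℝ), ∃ δ : ℝ,
    0 < δ ∧ δ < ε ∧ Real.exp δ * (β + δ) ^ 2 ≤ 1 / 6 := by
  intro ε hε
  have hf : Filter.Tendsto (fun δ : ℝ => Real.exp δ * (β + δ) ^ 2) (𝓝 0)
      (𝓝 (Real.exp 0 * (β + 0) ^ 2)) := by
    apply Filter.Tendsto.mul
    · exact (Real.continuous_exp.tendsto 0)
    · exact ((continuous_const.add continuous_id).pow 2).tendsto 0
  have hval : Real.exp 0 * (β + 0) ^ 2 = β ^ 2 := by simp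
  rw [hval] at hf
  have hev : ∀ᶠ δ in 𝓝 (0:ℝ), Real.exp δ * (β + δ) ^ 2 < 1 / 6 :=
    hf.eventually (gt_mem_nhds h.hβ2)
  have hev2 : ∀ᶠ δ in 𝓝[>] (0:ℝ), Real.exp δ * (β + δ) ^ 2 < 1 / 6 :=
    hev.filter_mono nhdsWithin_le_nhds
  have hev3 : ∀ᶠ δ in 𝓝[>] (0:ℝ), δ < ε := by
    have : Set.Iio ε ∈ 𝓝[>] (0:ℝ) :=
      nhdsWithin_le_nhds (Iio_mem_nhds hε)
    exact this
  have hev4 : ∀ᶠ δ in 𝓝[>] (0:ℝ), 0 < δ := eventually_mem_nhdsWithin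
  obtain ⟨δ, h1, h2, h3⟩ := (hev4.and (hev3.and hev2)).exists
  exact ⟨δ, h1, h2, h3.le⟩

/-- Limit of the bootstrap as δ → 0. -/
lemma Ctx.good0 (h : Ctx c β H φ) {t : ℝ} (ht0 : 0 < t) (htc : t < c) :
    ∀ u ∈ Icc (0:ℝ) t, 1 / (5 * u + 1 / β) ≤ H u ∧ H u ≤ β ∧ φ u ≤ 0 := by
  have hβ := h.hβ
  have hβinv : (0:ℝ) < 1 / β := by positivity
  intro u hu
  have hb : ∀ δ : ℝ, 0 < δ → Real.exp δ * (β + δ) ^ 2 ≤ 1 / 6 →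
      1 / (5 * u + 1 / β + δ) ≤ H u ∧ H u ≤ β + δ ∧ φ u ≤ δ :=
    fun δ h1 h2 => h.boot ht0 htc h1 h2 u hu
  have hA : (0:ℝ) < 5 * u + 1 / β := by linarith [hu.1]
  have hHpos : 0 < H u := by
    obtain ⟨δ₁, e1, _, e3⟩ := h.hsmall 1 one_pos
    have := (hb δ₁ e1 e3).1
    have hp : (0:ℝ) < 1 / (5 * u + 1 / β + δ₁) := by
      apply one_div_pos.mpr; linarith
    linarith
  refine ⟨?_, ?_, ?_⟩
  · by_contra hcc
    push_neg at hcc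
    have hlt : 5 * u + 1 / β < 1 / H u := by
      rw [lt_div_iff₀ hHpos]
      calc (5 * u + 1 / β) * H u < (5 * u + 1 / β) * (1 / (5 * u + 1 / β)) :=
            mul_lt_mul_of_pos_left hcc hA
        _ = 1 := by
            rw [mul_one_div, div_self hA.ne']
    obtain ⟨δ, h1, h2, h3⟩ := h.hsmall _ (sub_pos.mpr hlt)
    have h4 := (hb δ h1 h3).1
    have h5 : 5 * u + 1 / β + δ < 1 / H u := by linarith
    have h6 : 1 / (1 / H u) < 1 / (5 * u + 1 / β + δ) :=
      one_div_lt_one_div_of_lt (by linarith) h5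
    rw [one_div_one_div] at h6
    linarith
  · by_contra hcc
    push_neg at hcc
    obtain ⟨δ, h1, h2, h3⟩ := h.hsmall _ (sub_pos.mpr hcc)
    have h4 := (hb δ h1 h3).2.1
    linarith
  · by_contra hcc
    push_neg at hcc
    obtain ⟨δ, h1, h2, h3⟩ := h.hsmall _ hcc
    have h4 := (hb δ h1 h3).2.2
    linarith

set_option maxHeartbeats 1600000 in
/-- The final strict bounds at time `t`. -/
lemma Ctx.final (h : Ctx c β H φ) {t : ℝ} (ht0 : 0 < t) (htc : t < c) :
    -(12 * β ^ 2 + 2 * Real.sqrt 6) * Real.log ((1 / 2) * β * t + 1) < φ t ∧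
    φ t < -Real.log (1 + (3 / 5) * (β ^ 2 - 1 / (5 * t + 1 / β) ^ 2)) := by
  have hβ := h.hβ
  have hβinv : (0:ℝ) < 1 / β := by positivity
  have hsubt : Icc (0:ℝ) t ⊆ Ico 0 c := fun v hv => ⟨hv.1, lt_of_le_of_lt hv.2 htc⟩
  have hsubo : Ioo (0:ℝ) t ⊆ Ioo 0 c := fun v hv => ⟨hv.1, lt_trans hv.2 htc⟩
  have hoi : Ioo (0:ℝ) t ⊆ Icc (0:ℝ) t := Ioo_subset_Icc_self
  have hg := h.good0 ht0 htc
  have hcg : ∀ u ∈ Icc (0:ℝ) t, 0 < H u ∧ H u ≤ β ∧ φ u ≤ 0 := by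
    intro u hu
    obtain ⟨g1, g2, g3⟩ := hg u hu
    have : (0:ℝ) < 1 / (5 * u + 1 / β) := one_div_pos.mpr (by linarith [hu.1])
    exact ⟨lt_of_lt_of_le this g1, g2, g3⟩
  have hBL : Real.exp 0 * β ^ 2 ≤ 1 / 6 := by
    rw [Real.exp_zero, one_mul]; linarith [h.hβ2]
  have hcore := h.core htc hBL hcg
  have h0t : (0:ℝ) ∈ Icc (0:ℝ) t := ⟨le_rfl, ht0.le⟩
  have htt : t ∈ Icc (0:ℝ) t := ⟨ht0.le, le_rfl⟩
  constructor
  · -- LOWER BOUND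
    set C := 12 * β ^ 2 + 2 * Real.sqrt 6 with hCdef
    have hwpos : ∀ u : ℝ, 0 ≤ u → (0:ℝ) < (1 / 2) * β * u + 1 := by
      intro u hu
      have : (0:ℝ) ≤ (1 / 2) * β * u := by positivity
      linarith
    have hGcont : ContinuousOn (fun u => φ u + C * Real.log ((1 / 2) * β * u + 1))
        (Icc 0 t) := by
      apply (h.hφcont.mono hsubt).add
      apply continuousOn_const.mul
      apply ContinuousOn.log
      · exact (by fun_prop : Continuous fun u : ℝ => (1 / 2) * β * u + 1).continuousOn
      · intro u hu; exact (hwpos u hu.1).ne'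
    have hGmono : StrictMonoOn (fun u => φ u + C * Real.log ((1 / 2) * β * u + 1))
        (Icc 0 t) := by
      apply strictMonoOn_of_deriv_pos (convex_Icc 0 t) hGcont
      intro u hu
      rw [interior_Icc] at hu
      have hw0 := hwpos u hu.1.le
      have hlin : HasDerivAt (fun v : ℝ => (1 / 2) * β * v + 1) ((1 / 2) * β) u := by
        simpa using ((hasDerivAt_id u).const_mul ((1 / 2) * β)).add_const (1:ℝ)
      have hd : HasDerivAt (fun u => φ u + C * Real.log ((1 / 2) * β * u + 1))
          (deriv φ u + C * ((1 / 2) * β / ((1 / 2) * β * u + 1))) u :=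
        (h.hdφ (hsubo hu)).add ((hlin.log hw0.ne').const_mul C)
      rw [hd.deriv]
      obtain ⟨xb1, xb2, xb3, hφle, hH1, hH2⟩ := hcore u (hoi hu)
      have hapos := (hcg u (hoi hu)).1
      have hu0 : (0:ℝ) ≤ u := hu.1.le
      set a := H u
      set E := Real.exp (φ u)
      set w := (1 / 2) * β * u + 1 with hwdef
      have hw1 : (1:ℝ) ≤ w := by
        have : (0:ℝ) ≤ (1 / 2) * β * u := by positivity
        simp only [hwdef]; linarith
      have hd1 : (0:ℝ) < (1 / 2) * u + 1 / β := by linarith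
      have hd2 : 1 / ((3 / 2) * u + 1 / β) ≤ 1 / ((1 / 2) * u + 1 / β) :=
        one_div_le_one_div_of_le hd1 (by linarith)
      have hd3 : 1 / ((1 / 2) * u + 1 / β) = β / w := by
        rw [hwdef]; field_simp
      have hq : a ≤ β / w := by
        rw [← hd3]; exact le_trans hH2 hd2
      have haw : a * w ≤ β := (le_div_iff₀ hw0).mp (by rw [hwdef] at hq ⊢; exact hq)
      have haβ : a ≤ β := by nlinarith [haw, hw1, hapos]
      have hE1 : E ≤ 1 := by
        have := Real.exp_le_exp.mpr hφle
        rwa [Real.exp_zero] at this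
      have hEpos : (0:ℝ) < E := Real.exp_pos _
      have k1 : a ^ 2 * (a * w) ≤ a ^ 2 * β :=
        mul_le_mul_of_nonneg_left haw (sq_nonneg a)
      have k2 : a ^ 2 ≤ β ^ 2 := by nlinarith [hapos, haβ]
      have k3 : Real.sqrt 6 * (a * w) ≤ Real.sqrt 6 * β :=
        mul_le_mul_of_nonneg_left haw sqrt6_pos.le
      have key : (6 * E * a ^ 3 + Real.sqrt 6 * a) * w ≤ 6 * β ^ 3 + Real.sqrt 6 * β := by
        have k4 : E * (a ^ 3 * w) ≤ a ^ 3 * w := by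
          have h5 : (0:ℝ) ≤ a ^ 3 * w := by positivity
          nlinarith [h5, hE1]
        nlinarith [k1, k2, k3, k4, hapos, hw1, sqrt6_pos, hβ]
      have hstep : 6 * E * a ^ 3 + Real.sqrt 6 * a ≤ (6 * β ^ 3 + Real.sqrt 6 * β) / w :=
        (le_div_iff₀ hw0).mpr key
      have hCval : C * ((1 / 2) * β / w) = (6 * β ^ 3 + Real.sqrt 6 * β) / w := by
        rw [hCdef, ← mul_div_assoc]
        congr 1
        ring
      rw [hCval]
      linarith [xb2, hstep]
    have hGlt : φ 0 + C * Real.log ((1 / 2) * β * 0 + 1)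
        < φ t + C * Real.log ((1 / 2) * β * t + 1) := hGmono h0t htt ht0
    have hG0 : φ 0 + C * Real.log ((1 / 2) * β * 0 + 1) = 0 := by
      rw [h.hφ0]
      norm_num
    rw [hG0] at hGlt
    linarith [hGlt]
  · -- UPPER BOUND
    have hApos : ∀ u : ℝ, 0 ≤ u → (0:ℝ) < 5 * u + 1 / β := by
      intro u hu; linarith
    have hFcont : ContinuousOn
        (fun u => Real.exp (-φ u) - 1 - (3 / 5) * (β ^ 2 - 1 / (5 * u + 1 / β) ^ 2))
        (Icc 0 t) := by
      apply ContinuousOn.sub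
      · exact (Real.continuous_exp.comp_continuousOn (h.hφcont.mono hsubt).neg).sub
          continuousOn_const
      · apply continuousOn_const.mul
        apply continuousOn_const.sub
        apply continuousOn_const.div
        · exact ((by fun_prop : Continuous fun u : ℝ => 5 * u + 1 / β).continuousOn).pow 2
        · intro u hu
          exact pow_ne_zero 2 (hApos u hu.1).ne'
    have hFmono : StrictMonoOn
        (fun u => Real.exp (-φ u) - 1 - (3 / 5) * (β ^ 2 - 1 / (5 * u + 1 / β) ^ 2))
        (Icc 0 t) := by
      apply strictMonoOn_of_deriv_pos (convex_Icc 0 t) hFcont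
      intro u hu
      rw [interior_Icc] at hu
      have hu0 : (0:ℝ) ≤ u := hu.1.le
      have hA0 := hApos u hu0
      have hdexp : HasDerivAt (fun v => Real.exp (-φ v))
          (Real.exp (-φ u) * -deriv φ u) u := ((h.hdφ (hsubo hu)).neg).exp
      have hdA : HasDerivAt (fun v : ℝ => 5 * v + 1 / β) 5 u := by
        simpa using ((hasDerivAt_id u).const_mul (5:ℝ)).add_const (1/β : ℝ)
      have hdA2 : HasDerivAt (fun v : ℝ => (5 * v + 1 / β) ^ 2)
          (2 * (5 * u + 1 / β) * 5) u := by
        simpa using hdA.fun_pow 2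
      have hdinv : HasDerivAt (fun v : ℝ => 1 / (5 * v + 1 / β) ^ 2)
          ((0 * (5 * u + 1 / β) ^ 2 - 1 * (2 * (5 * u + 1 / β) * 5))
            / ((5 * u + 1 / β) ^ 2) ^ 2) u :=
        (hasDerivAt_const u (1:ℝ)).div hdA2 (pow_ne_zero 2 hA0.ne')
      have hd : HasDerivAt
          (fun u => Real.exp (-φ u) - 1 - (3 / 5) * (β ^ 2 - 1 / (5 * u + 1 / β) ^ 2))
          (Real.exp (-φ u) * -deriv φ u
            - (3 / 5) * (0 - (0 * (5 * u + 1 / β) ^ 2 - 1 * (2 * (5 * u + 1 / β) * 5))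
              / ((5 * u + 1 / β) ^ 2) ^ 2)) u := by
        have := (hdexp.sub_const (1:ℝ)).sub
          (((hasDerivAt_const u (β ^ 2 : ℝ)).sub hdinv).const_mul (3/5 : ℝ))
        convert this using 1
        all_goals rfl
      rw [hd.deriv]
      obtain ⟨xb1, _, _, hφle, _, _⟩ := hcore u (hoi hu)
      have hapos := (hcg u (hoi hu)).1
      have hg1 := (hg u (hoi hu)).1
      set a := H u
      set E := Real.exp (φ u)
      have hEE : E * Real.exp (-φ u) = 1 := by
        rw [← Real.exp_add]
        simp
      have heq : Real.exp (-φ u) * -deriv φ u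
            - (3 / 5) * (0 - (0 * (5 * u + 1 / β) ^ 2 - 1 * (2 * (5 * u + 1 / β) * 5))
              / ((5 * u + 1 / β) ^ 2) ^ 2)
          = Real.exp (-φ u) * -deriv φ u - 6 * (1 / (5 * u + 1 / β)) ^ 3 := by
        field_simp
        ring
      rw [heq]
      have hcube : (1 / (5 * u + 1 / β)) ^ 3 ≤ a ^ 3 := by
        apply pow_le_pow_left₀ (le_of_lt (one_div_pos.mpr hA0)) hg1
      have hmul : Real.exp (-φ u) * (6 * E * a ^ 3) = 6 * a ^ 3 := by
        have : Real.exp (-φ u) * (6 * E * a ^ 3) = 6 * a ^ 3 * (E * Real.exp (-φ u)) := by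
          ring
        rw [this, hEE, mul_one]
      have hexppos : (0:ℝ) < Real.exp (-φ u) := Real.exp_pos _
      have hlt : Real.exp (-φ u) * (6 * E * a ^ 3) < Real.exp (-φ u) * -deriv φ u := by
        apply mul_lt_mul_of_pos_left _ hexppos
        linarith [xb1]
      rw [hmul] at hlt
      linarith [hcube, hlt]
    have hFlt : Real.exp (-φ 0) - 1 - (3 / 5) * (β ^ 2 - 1 / (5 * 0 + 1 / β) ^ 2)
        < Real.exp (-φ t) - 1 - (3 / 5) * (β ^ 2 - 1 / (5 * t + 1 / β) ^ 2) :=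
      hFmono h0t htt ht0
    have hF0 : Real.exp (-φ 0) - 1 - (3 / 5) * (β ^ 2 - 1 / (5 * 0 + 1 / β) ^ 2) = 0 := by
      rw [h.hφ0, neg_zero, Real.exp_zero]
      have h5 : 5 * (0:ℝ) + 1 / β = 1 / β := by norm_num
      rw [h5, div_pow, one_pow, one_div_one_div]
      ring
    rw [hF0] at hFlt
    have hZ : 0 ≤ β ^ 2 - 1 / (5 * t + 1 / β) ^ 2 := by
      have hAt : (0:ℝ) < 5 * t + 1 / β := hApos t ht0.le
      have h1 : 1 / (5 * t + 1 / β) ≤ 1 / (1 / β) :=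
        one_div_le_one_div_of_le hβinv (by linarith)
      rw [one_div_one_div] at h1
      have h2 : (1 / (5 * t + 1 / β)) ^ 2 ≤ β ^ 2 :=
        pow_le_pow_left₀ (le_of_lt (one_div_pos.mpr hAt)) h1 2
      have h3 : (1 / (5 * t + 1 / β)) ^ 2 = 1 / (5 * t + 1 / β) ^ 2 := by
        rw [div_pow, one_pow]
      linarith [h2, h3 ▸ h2]
    have h1Z : (0:ℝ) < 1 + (3 / 5) * (β ^ 2 - 1 / (5 * t + 1 / β) ^ 2) := by linarith
    have hexp : 1 + (3 / 5) * (β ^ 2 - 1 / (5 * t + 1 / β) ^ 2) < Real.exp (-φ t) := by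
      linarith [hFlt]
    have := (Real.log_lt_iff_lt_exp h1Z).mpr hexp
    linarith [this]

end S12

/-- If `(H, φ)` solves the EdGB FLRW system on `[0, b)` (with `b ∈ (0, +∞]`) with
the negative-branch initial data with parameter `β`, then for all `t ∈ (0, b)`,
`−(12β² + 2√6)·ln((1/2)βt + 1) < φ(t) < −ln(1 + (3/5)(β² − 1/(5t + 1/β)²))`. -/
theorem stmt_12 (b : EReal) (hb : 0 < b) (β : ℝ) (H φ : ℝ → ℝ)
    (hsys : EdGB H φ {t : ℝ | 0 ≤ t ∧ (t : EReal) < b})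
    (hdata : NegBranchData H φ β) :
    ∀ t : ℝ, 0 < t → (t : EReal) < b →
      -(12 * β ^ 2 + 2 * Real.sqrt 6) * Real.log ((1 / 2) * β * t + 1) < φ t
        ∧ φ t < -Real.log (1 + (3 / 5) * (β ^ 2 - 1 / (5 * t + 1 / β) ^ 2)) := by
  obtain ⟨hH, hφ2, hcon, hsc⟩ := hsys
  obtain ⟨hβ, hβ6, hH0, hφ0, hX0⟩ := hdata
  intro t ht htb
  have hexc : ∃ c : ℝ, t < c ∧ ∀ s : ℝ, 0 ≤ s → s < c → (s : EReal) < b := by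
    by_cases hbtop : b = ⊤
    · refine ⟨t + 1, by linarith, fun s _ _ => ?_⟩
      rw [hbtop]
      exact EReal.coe_lt_top s
    · have hbbot : b ≠ ⊥ := ne_bot_of_gt hb
      have hcoe : ((b.toReal : ℝ) : EReal) = b := EReal.coe_toReal hbtop hbbot
      refine ⟨b.toReal, ?_, fun s _ hs => ?_⟩
      · rw [← hcoe] at htb
        exact_mod_cast htb
      · rw [← hcoe]
        exact_mod_cast hs
  obtain ⟨c, htc, hc⟩ := hexc
  have hset : Set.Ico (0:ℝ) c ⊆ {s : ℝ | 0 ≤ s ∧ (s : EReal) < b} :=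
    fun s hs => ⟨hs.1, hc s hs.1 hs.2⟩
  have ctx : S12.Ctx c β H φ :=
    ⟨lt_trans ht htc, hβ, hβ6, hH.mono hset, hφ2.mono hset,
      fun u hu => hcon u (hset hu), fun u hu => hsc u (hset hu), hH0, hφ0, hX0⟩
  exact ctx.final ht htc
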